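/- arXiv:1708.03828 — 2 statements merged into one kernel-verified Lean document; each statement's English description precedes it below -/
import Mathlib

section
/- Let X be an n×n symmetric positive definite matrix with Cholesky-type factorizations X = Rᵀ R, and let Y = Hᵀ H be symmetric positive definite, with singular value decomposition H Rᵀ = U Σ Vᵀ (U, V orthogonal, Σ diagonal positive definite). Define T = Σ^{−1/2} Uᵀ H. Then T is invertible with T⁻¹ = Rᵀ V Σ^{−1/2}, and T X Tᵀ = T⁻ᵀ Y T⁻¹ = Σ. -/
open Matrix

lemma isDiag_comm {n : ℕ} {A B : Matrix (Fin n) (Fin n) ℝ}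
    (hA : A.IsDiag) (hB : B.IsDiag) : A * B = B * A := by
  rw [← hA.diagonal_diag, ← hB.diagonal_diag, diagonal_mul_diagonal,
    diagonal_mul_diagonal]
  exact congrArg diagonal (funext fun i => mul_comm (A.diag i) (B.diag i))

theorem stmt_16 (n : ℕ)
    (X Y R H U V S Sh : Matrix (Fin n) (Fin n) ℝ)
    (hX : X.PosDef) (hY : Y.PosDef)
    (hXR : X = Rᵀ * R) (hYH : Y = Hᵀ * H)
    (hR : IsUnit R.det) (hH : IsUnit H.det)
    (hU : U ∈ Matrix.orthogonalGroup (Fin n) ℝ)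
    (hV : V ∈ Matrix.orthogonalGroup (Fin n) ℝ)
    (hS : S.PosDef) (hSdiag : S.IsDiag)
    (hSVD : H * Rᵀ = U * S * Vᵀ)
    -- Sh is Σ^{-1/2}: the positive definite diagonal square root of Σ⁻¹
    (hSh : Sh.PosDef) (hShdiag : Sh.IsDiag) (hShsq : Sh * Sh = S⁻¹) :
    (Sh * Uᵀ * H) * (Rᵀ * V * Sh) = 1 ∧ (Rᵀ * V * Sh) * (Sh * Uᵀ * H) = 1 ∧
      (Sh * Uᵀ * H) * X * (Sh * Uᵀ * H)ᵀ = S ∧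
      (Rᵀ * V * Sh)ᵀ * Y * (Rᵀ * V * Sh) = S := by
  have hSunit : IsUnit S.det := isUnit_iff_ne_zero.mpr hS.det_pos.ne'
  have hUU : Uᵀ * U = 1 := by
    have := (mem_orthogonalGroup_iff' (n := Fin n) (R := ℝ)).mp hU
    simpa [star_eq_conjTranspose, conjTranspose] using this
  have hVV : Vᵀ * V = 1 := by
    have := (mem_orthogonalGroup_iff' (n := Fin n) (R := ℝ)).mp hV
    simpa [star_eq_conjTranspose, conjTranspose] using this
  have hSsymm : Sᵀ = S := hSdiag.isSymm
  have hShsymm : Shᵀ = Sh := hShdiag.isSymm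
  -- transpose of SVD
  have hSVDT : R * Hᵀ = V * S * Uᵀ := by
    have := congrArg transpose hSVD
    simpa [transpose_mul, hSsymm, Matrix.mul_assoc] using this
  have hc : S * Sh = Sh * S := isDiag_comm hSdiag hShdiag
  have key : Sh * S * Sh = 1 := by
    rw [Matrix.mul_assoc, hc, ← Matrix.mul_assoc, hShsq, Matrix.nonsing_inv_mul S hSunit]
  have key2 : Sh * (S * S) * Sh = S := by
    have h3 : S * (S * Sh) = S * Sh * S := by
      rw [hc, ← Matrix.mul_assoc, hc]
    calc Sh * (S * S) * Sh = Sh * (S * (S * Sh)) := by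
          rw [Matrix.mul_assoc, Matrix.mul_assoc]
      _ = Sh * (S * Sh * S) := by rw [h3]
      _ = (Sh * S * Sh) * S := by simp only [Matrix.mul_assoc]
      _ = S := by rw [key, Matrix.one_mul]
  have h1 : (Sh * Uᵀ * H) * (Rᵀ * V * Sh) = 1 := by
    have : Sh * Uᵀ * (H * Rᵀ) * V * Sh = Sh * S * Sh := by
      rw [hSVD]
      calc Sh * Uᵀ * (U * S * Vᵀ) * V * Sh
          = Sh * ((Uᵀ * U) * S * (Vᵀ * V)) * Sh := by noncomm_ring
        _ = Sh * S * Sh := by rw [hUU, hVV]; noncomm_ring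
    calc (Sh * Uᵀ * H) * (Rᵀ * V * Sh) = Sh * Uᵀ * (H * Rᵀ) * V * Sh := by noncomm_ring
      _ = 1 := by rw [this, key]
  refine ⟨h1, mul_eq_one_comm.mp h1, ?_, ?_⟩
  · calc (Sh * Uᵀ * H) * X * (Sh * Uᵀ * H)ᵀ
        = Sh * Uᵀ * ((H * Rᵀ) * (H * Rᵀ)ᵀ) * U * Sh := by
          rw [hXR]; simp [transpose_mul, hShsymm, Matrix.mul_assoc]
      _ = Sh * (S * S) * Sh := by
          rw [hSVD]
          simp [transpose_mul, hSsymm, Matrix.mul_assoc]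
          rw [← Matrix.mul_assoc Vᵀ V, hVV, Matrix.one_mul, ← Matrix.mul_assoc Uᵀ U, hUU,
            Matrix.one_mul, ← Matrix.mul_assoc Uᵀ U Sh, hUU, Matrix.one_mul]
      _ = S := key2
  · calc (Rᵀ * V * Sh)ᵀ * Y * (Rᵀ * V * Sh)
        = Sh * Vᵀ * ((R * Hᵀ) * (R * Hᵀ)ᵀ) * V * Sh := by
          rw [hYH]; simp [transpose_mul, hShsymm, Matrix.mul_assoc]
      _ = Sh * (S * S) * Sh := by
          rw [hSVDT]
          simp [transpose_mul, hSsymm, Matrix.mul_assoc]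
          rw [← Matrix.mul_assoc Uᵀ U, hUU, Matrix.one_mul, ← Matrix.mul_assoc Vᵀ V, hVV,
            Matrix.one_mul, ← Matrix.mul_assoc Vᵀ V Sh, hVV, Matrix.one_mul]
      _ = S := key2
end

section
/- Let X, Y be n×n real symmetric positive definite matrices and let T be an invertible n×n matrix with T X Tᵀ = T⁻ᵀ Y T⁻¹ = Σ for a diagonal matrix Σ. Then Σ is positive definite and Σ² is similar to X Y; in particular the diagonal entries of Σ are the positive square roots of the eigenvalues of X Y. -/
open Matrix

theorem stmt_17 (n : ℕ) (X Y T S : Matrix (Fin n) (Fin n) ℝ)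
    (hX : X.PosDef) (hY : Y.PosDef) (hT : IsUnit T.det) (hSdiag : S.IsDiag)
    (h₁ : T * X * Tᵀ = S) (h₂ : (T⁻¹)ᵀ * Y * T⁻¹ = S) :
    S.PosDef ∧ (∃ P : Matrix (Fin n) (Fin n) ℝ, IsUnit P.det ∧
      S * S = P * (X * Y) * P⁻¹) ∧
    ∀ i : Fin n, 0 < S i i ∧ (S i i) ^ 2 ∈ spectrum ℝ (X * Y) := by
  have hTinv : T⁻¹ * T = 1 := Matrix.nonsing_inv_mul T hT
  have hTTinv : T * T⁻¹ = 1 := Matrix.mul_nonsing_inv T hT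
  have hTt : Tᵀ * (T⁻¹)ᵀ = 1 := by
    rw [← Matrix.transpose_mul, hTinv, Matrix.transpose_one]
  have hTt' : (T⁻¹)ᵀ * Tᵀ = 1 := by
    rw [← Matrix.transpose_mul, hTTinv, Matrix.transpose_one]
  -- S is positive definite
  have hSpd : S.PosDef := by
    rw [Matrix.posDef_iff_dotProduct_mulVec]
    constructor
    · rw [← h₁]
      have h := Matrix.isHermitian_mul_mul_conjTranspose T hX.1
      rwa [Matrix.conjTranspose_eq_transpose_of_trivial] at h
    · intro x hx
      have hy : Tᵀ *ᵥ x ≠ 0 := by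
        intro h
        apply hx
        have h2 : ((T⁻¹)ᵀ * Tᵀ) *ᵥ x = (T⁻¹)ᵀ *ᵥ (0 : Fin n → ℝ) := by
          rw [← Matrix.mulVec_mulVec, h]
        rw [hTt'] at h2
        simpa using h2
      have hpos := hX.dotProduct_mulVec_pos (x := Tᵀ *ᵥ x) hy
      rw [← h₁]
      have : star x ⬝ᵥ (T * X * Tᵀ) *ᵥ x = star (Tᵀ *ᵥ x) ⬝ᵥ X *ᵥ (Tᵀ *ᵥ x) := by
        simp only [star_trivial]
        rw [← Matrix.mulVec_mulVec, ← Matrix.mulVec_mulVec, Matrix.dotProduct_mulVec,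
          ← Matrix.mulVec_transpose, Matrix.dotProduct_mulVec]
      rw [this]
      exact hpos
  -- key similarity
  have key : S * S = T * (X * Y) * T⁻¹ := by
    have e : S * S = (T * X * Tᵀ) * ((T⁻¹)ᵀ * Y * T⁻¹) := by rw [h₁, h₂]
    rw [e]
    calc T * X * Tᵀ * ((T⁻¹)ᵀ * Y * T⁻¹)
        = T * X * (Tᵀ * (T⁻¹)ᵀ) * Y * T⁻¹ := by
          simp only [Matrix.mul_assoc]
      _ = T * (X * Y) * T⁻¹ := by rw [hTt]; simp [Matrix.mul_assoc]
  have hdiagpos : ∀ i : Fin n, 0 < S i i := by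
    intro i
    have := hSpd.dotProduct_mulVec_pos (x := Pi.single i 1) (fun h => (one_ne_zero (α := ℝ)) (by simpa using congrFun h i))
    simpa [dotProduct, Matrix.mulVec, Pi.single_apply, Finset.sum_ite_eq,
      dotProduct, mul_comm] using this
  refine ⟨hSpd, ⟨T, hT, key⟩, fun i => ⟨hdiagpos i, ?_⟩⟩
  -- spectrum membership
  have hXY : X * Y = T⁻¹ * (S * S) * T := by
    rw [key]
    have e2 : T⁻¹ * (T * (X * Y) * T⁻¹) * T = (T⁻¹ * T) * (X * Y) * (T⁻¹ * T) := by
      simp only [Matrix.mul_assoc]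
    rw [e2, hTinv, Matrix.one_mul, Matrix.mul_one]
  rw [spectrum.mem_iff]
  intro hu
  rw [Matrix.isUnit_iff_isUnit_det] at hu
  set A := (algebraMap ℝ (Matrix (Fin n) (Fin n) ℝ)) ((S i i) ^ 2) with hA
  have hdet : (A - X * Y).det = 0 := by
    have hrw : A - X * Y = T⁻¹ * (A - S * S) * T := by
      rw [hXY, Matrix.mul_sub, Matrix.sub_mul]
      congr 1
      rw [Matrix.mul_assoc, hA, Algebra.commutes ((S i i) ^ 2) T, ← Matrix.mul_assoc, hTinv,
        Matrix.one_mul]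
    rw [hrw]
    have hmid : (A - S * S).det = 0 := by
      apply Matrix.det_eq_zero_of_row_eq_zero i
      intro j
      have hAij : A i j = if i = j then (S i i) ^ 2 else 0 := by
        rw [hA, Matrix.algebraMap_matrix_apply]; simp
      have hSS : (S * S) i j = S i i * S i j := by
        rw [Matrix.mul_apply]
        rw [Finset.sum_eq_single i]
        · intro k _ hk
          rw [hSdiag (Ne.symm hk), zero_mul]
        · intro h; exact absurd (Finset.mem_univ i) h
      by_cases hij : i = j
      · subst hij
        simp [Matrix.sub_apply, hAij, hSS, sq]
      · simp [Matrix.sub_apply, hAij, hSS, hSdiag hij, hij]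
    rw [Matrix.det_mul, Matrix.det_mul, hmid, mul_zero, zero_mul]
  rw [hdet] at hu
  exact not_isUnit_zero hu
end
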